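/- Let ν ≥ 0 be an integer and x > 0 fixed. Define Φ_1(x;g) = −∑_{k=0}^∞ ((−1)^k x^k/(k! Γ(k+ν+1))) I_k(x/(2g)) for g > 0 (the residue-series form of (1/2πi)∮_Σ Γ(−t) x^t I_t(x/(2g))/Γ(t+ν+1) dt). Then lim_{g→+∞} Φ_1(x;g) = −1/Γ(ν+1). Moreover, with φ(x;g) = −∑_{k=0}^∞ ((−1)^k x^{2k}/((k!)² Γ(k+ν+1) (4g)^k)), one has lim_{g→+∞} (Φ_1(x;g) − φ(x;g)) = 0. -/

import Mathlib

open Filter Topology MeasureTheory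

/-- Pochhammer symbol `(a)_k = a(a+1)⋯(a+k-1)`. -/
noncomputable def poch (a : ℂ) (k : ℕ) : ℂ := ∏ i ∈ Finset.range k, (a + i)

/-- Modified Bessel function of the first kind of complex order `t`, real argument `z > 0`,
defined by its series, with `1/Γ = 0` at the poles of `Γ`. -/
noncomputable def besselI (t : ℂ) (z : ℝ) : ℂ :=
  ∑' m : ℕ, (1 / ((m.factorial : ℂ) * Complex.Gamma (t + m + 1))) *
    ((z / 2 : ℝ) : ℂ) ^ (2 * (m : ℂ) + t)

/-- Modified Bessel function of the second kind of complex order `κ` (with `Re κ > -1/2`),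
real argument `z > 0`. -/
noncomputable def besselK (κ : ℂ) (z : ℝ) : ℂ :=
  Complex.Gamma (κ + 1 / 2) * ((2 * z : ℝ) : ℂ) ^ κ / (Real.sqrt Real.pi : ℂ) *
    ∫ t in Set.Ioi (0 : ℝ), (Real.cos t : ℂ) * (((t ^ 2 + z ^ 2 : ℝ) : ℂ)) ^ (-κ - 1 / 2)

/-- Bessel function of the first kind of real order `ρ`, argument `z > 0`. -/
noncomputable def besselJ (ρ : ℝ) (z : ℝ) : ℝ :=
  ∑' m : ℕ, ((-1 : ℝ) ^ m / (m.factorial * Real.Gamma ((m : ℝ) + 1 + ρ))) *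
    (z / 2) ^ (2 * (m : ℝ) + ρ)

/-- The function `P_n(x)`. -/
noncomputable def Pfun (ν : ℕ) (μ : ℝ) (n : ℕ) (x : ℝ) : ℂ :=
  (-1 : ℂ) ^ n * (((ν + n).factorial : ℂ) * (n.factorial : ℂ) / (ν.factorial : ℂ)) *
    (Real.sqrt μ : ℂ)⁻¹ *
    ∑ k ∈ Finset.range (n + 1),
      ((2 * Real.sqrt x / (1 - μ) : ℝ) : ℂ) ^ k *
        (poch (-(n : ℂ)) k / (poch ((ν : ℂ) + 1) k * (k.factorial : ℂ))) *
        besselI (k : ℂ) ((1 - μ) * Real.sqrt x / μ)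

/-- The function `Q_n(y)`. -/
noncomputable def Qfun (ν : ℕ) (μ : ℝ) (n : ℕ) (y : ℝ) : ℂ :=
  (-1 : ℂ) ^ n * (2 / ((n.factorial : ℂ) ^ 2 * (ν.factorial : ℂ))) * (Real.sqrt μ : ℂ)⁻¹ *
    ∑ l ∈ Finset.range (n + 1),
      ((2 * Real.sqrt y / (1 + μ) : ℝ) : ℂ) ^ (l + ν) *
        (poch (-(n : ℂ)) l / (poch ((ν : ℂ) + 1) l * (l.factorial : ℂ))) *
        besselK ((l : ℂ) + ν) ((1 + μ) * Real.sqrt y / μ)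

/-- The correlation kernel `K_N(x,y;μ) = ∑_{n=0}^{N-1} P_n(x) Q_n(y)`. -/
noncomputable def Kker (ν N : ℕ) (μ x y : ℝ) : ℂ :=
  ∑ n ∈ Finset.range N, Pfun ν μ n x * Qfun ν μ n y

/-- The Bessel kernel in square-root variables, for `x ≠ y`. -/
noncomputable def SBessel (ν : ℕ) (x y : ℝ) : ℝ :=
  -(y / x) ^ ((ν : ℝ) / 2) *
    (2 * Real.sqrt x * besselJ ((ν : ℝ) - 1) (2 * Real.sqrt x) * besselJ (ν : ℝ) (2 * Real.sqrt y) -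
      2 * Real.sqrt y * besselJ ((ν : ℝ) - 1) (2 * Real.sqrt y) * besselJ (ν : ℝ) (2 * Real.sqrt x)) /
    ((x - y) * Real.sqrt x * Real.sqrt y)

/-- The polynomial `𝒫(s,t,ν)`. -/
noncomputable def Ppoly (s t : ℂ) (ν : ℕ) : ℂ :=
  (1 / 4) * (t - s) * (t ^ 2 + s ^ 2 + (t + s) * ((ν : ℂ) - 1) - (ν : ℂ))

/-- The interpolating kernel `𝕊(x,y;g)` (residue-series form), for `x ≠ y`. -/
noncomputable def Sker (ν : ℕ) (g x y : ℝ) : ℂ :=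
  (4 / (((x ^ 2 - y ^ 2 : ℝ) : ℂ) * (g : ℂ))) *
    ∑' k : ℕ, ∑' l : ℕ,
      ((-1 : ℂ) ^ (k + l) / ((k.factorial : ℂ) * (l.factorial : ℂ))) *
        ((x : ℂ) ^ k * (y : ℂ) ^ (l + ν) /
          (Complex.Gamma ((k : ℂ) + ν + 1) * Complex.Gamma ((l : ℂ) + ν + 1))) *
        (Ppoly (l : ℂ) (k : ℂ) ν -
          (g : ℂ) * ((l : ℂ) ^ 2 + (k : ℂ) ^ 2 + (ν : ℂ) * l - (l : ℂ) * k)) *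
        besselI (k : ℂ) (x / (2 * g)) * besselK ((l : ℂ) + ν) (y / (2 * g))

/-- The diagonal value `𝕊(x,x;g)` of the interpolating kernel. -/
noncomputable def SkerDiag (ν : ℕ) (g x : ℝ) : ℂ :=
  (1 / ((g : ℂ) ^ 2 * (x : ℂ))) *
    ∑' k : ℕ, ∑' l : ℕ,
      ((-1 : ℂ) ^ (k + l) / ((k.factorial : ℂ) * (l.factorial : ℂ))) *
        ((x : ℂ) ^ (k + l + ν) /
          (Complex.Gamma ((k : ℂ) + ν + 1) * Complex.Gamma ((l : ℂ) + ν + 1))) *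
        (Ppoly (l : ℂ) (k : ℂ) ν -
          (g : ℂ) * ((l : ℂ) ^ 2 + (k : ℂ) ^ 2 + (ν : ℂ) * l - (l : ℂ) * k)) *
        besselI ((k : ℂ) - 1) (x / (2 * g)) * besselK ((l : ℂ) + ν) (x / (2 * g))

/-- The generalized Laguerre polynomial `L_n^{(ν)}(x)`. -/
noncomputable def laguerreL (ν n : ℕ) (x : ℝ) : ℝ :=
  ∑ k ∈ Finset.range (n + 1),
    (-1 : ℝ) ^ k * Real.Gamma ((n : ℝ) + ν + 1) /
      ((n - k).factorial * Real.Gamma ((ν : ℝ) + k + 1) * k.factorial) * x ^ k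

/-- The function `A_N(s,t;μ)` from the Christoffel–Darboux analysis. -/
noncomputable def Afun (ν N : ℕ) (s t : ℂ) (μ : ℝ) : ℂ :=
  -(((1 + μ : ℝ) : ℂ) ^ 2 / 4) * (t - (N : ℂ)) * (t - (N : ℂ) + 1)
  - (((1 + μ : ℝ) : ℂ) ^ 2 / 4) * ((ν : ℂ) + (N : ℂ) + 1) * ((N : ℂ) + 1) *
      (t - (N : ℂ)) / (s - (N : ℂ) - 1)
  - (μ : ℂ) * (3 * (N : ℂ) + (ν : ℂ)) * (t - (N : ℂ))
  - (((1 - μ : ℝ) : ℂ) ^ 2 / 2) * (2 * (N : ℂ) + (ν : ℂ)) * (t - (N : ℂ))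
  + (μ : ℂ) * (N : ℂ) * (s - (N : ℂ))
  + (((1 - μ : ℝ) : ℂ) ^ 2 / 2) * (2 * (N : ℂ) + (ν : ℂ)) * (s - (N : ℂ))
  + (((1 - μ : ℝ) : ℂ) ^ 2 / 4) * (s - (N : ℂ)) * (s - (N : ℂ) + 1)
  + (((1 - μ : ℝ) : ℂ) ^ 2 / 4) * ((N : ℂ) + 1) * ((ν : ℂ) + (N : ℂ) + 1) *
      (s - (N : ℂ)) / (t - (N : ℂ) - 1)

/-- Kummer's confluent hypergeometric function `Φ(a;b;z)`. -/
noncomputable def kummer (a b z : ℂ) : ℂ :=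
  ∑' m : ℕ, poch a m / (poch b m * (m.factorial : ℂ)) * z ^ m

/-- Wright's generalized Bessel function `J_{a,b}(x)`. -/
noncomputable def wrightJ (a b x : ℝ) : ℝ :=
  ∑' j : ℕ, (-x) ^ j / (j.factorial * Real.Gamma (a + b * j))

/-- Borodin's hard edge kernel `K^{(α,θ)}(x,y)`. -/
noncomputable def borodinK (α θ x y : ℝ) : ℝ :=
  θ * x ^ α * ∫ u in (0 : ℝ)..1,
    wrightJ ((α + 1) / θ) (1 / θ) (x * u) * wrightJ (α + 1) θ ((y * u) ^ θ) * u ^ α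


lemma aux_Gamma_eq (k ν : ℕ) : Complex.Gamma ((k : ℂ) + ν + 1) = ((k + ν).factorial : ℂ) := by
  rw [show ((k : ℂ) + ν + 1) = (((k + ν : ℕ) : ℂ) + 1) by push_cast; ring,
    Complex.Gamma_nat_eq_factorial]

lemma aux_besselI_nat (k : ℕ) (z : ℝ) :
    besselI (k : ℂ) z =
      ∑' m : ℕ, ((z / 2 : ℝ) : ℂ) ^ (2 * m + k) /
        ((m.factorial : ℂ) * ((k + m).factorial : ℂ)) := by
  unfold besselI
  refine tsum_congr fun m => ?_
  rw [show ((k : ℂ) + m + 1) = (((k + m : ℕ) : ℂ) + 1) by push_cast; ring,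
    Complex.Gamma_nat_eq_factorial,
    show (2 * (m : ℂ) + k) = ((2 * m + k : ℕ) : ℂ) by push_cast; ring,
    Complex.cpow_natCast]
  ring

lemma aux_Phi1_tendsto (ν : ℕ) (x : ℝ) (hx : 0 < x) :
    Tendsto (fun g : ℝ =>
        -(∑' k : ℕ, ((-1 : ℂ) ^ k * (x : ℂ) ^ k /
            ((k.factorial : ℂ) * Complex.Gamma ((k : ℂ) + ν + 1))) *
          besselI (k : ℂ) (x / (2 * g))))
      atTop (𝓝 (-(1 / Complex.Gamma ((ν : ℂ) + 1)))) := by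
  have hν : Complex.Gamma ((ν : ℂ) + 1) = (ν.factorial : ℂ) := by
    exact_mod_cast Complex.Gamma_nat_eq_factorial ν
  simp only [aux_Gamma_eq, hν]
  set F : ℝ → ℕ × ℕ → ℂ := fun g p =>
    ((-1 : ℂ) ^ p.1 * (x : ℂ) ^ p.1 / ((p.1.factorial : ℂ) * ((p.1 + ν).factorial : ℂ))) *
      (((x / (2 * g) / 2 : ℝ) : ℂ) ^ (2 * p.2 + p.1) /
        ((p.2.factorial : ℂ) * ((p.1 + p.2).factorial : ℂ))) with hF
  set bound : ℕ × ℕ → ℝ := fun p => (x ^ p.1 / p.1.factorial) * (1 ^ p.2 / p.2.factorial)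
    with hbdef
  have h_sum : Summable bound :=
    (Real.summable_pow_div_factorial x).mul_of_nonneg (Real.summable_pow_div_factorial 1)
      (fun k => by positivity) (fun k => by positivity)
  have hb : ∀ g : ℝ, max x 1 ≤ g → ∀ p, ‖F g p‖ ≤ bound p := by
    intro g hg p
    obtain ⟨k, m⟩ := p
    have hgx : x ≤ g := le_trans (le_max_left _ _) hg
    have hg1 : (1 : ℝ) ≤ g := le_trans (le_max_right _ _) hg
    have hg0 : (0 : ℝ) < g := lt_of_lt_of_le one_pos hg1
    have hw0 : 0 < x / (2 * g) / 2 := by positivity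
    have hw1 : x / (2 * g) / 2 ≤ 1 := by
      rw [div_le_one (by norm_num : (0:ℝ) < 2), div_le_iff₀ (by positivity)]
      nlinarith
    have hk1 : (1 : ℝ) ≤ ((k + ν).factorial : ℝ) := by
      exact_mod_cast Nat.one_le_iff_ne_zero.mpr (Nat.factorial_ne_zero _)
    have hm1 : (1 : ℝ) ≤ ((k + m).factorial : ℝ) := by
      exact_mod_cast Nat.one_le_iff_ne_zero.mpr (Nat.factorial_ne_zero _)
    have hkf : (0 : ℝ) < (k.factorial : ℝ) := by
      exact_mod_cast Nat.factorial_pos k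
    have hmf : (0 : ℝ) < (m.factorial : ℝ) := by
      exact_mod_cast Nat.factorial_pos m
    have hpow : (x / (2 * g) / 2) ^ (2 * m + k) ≤ 1 := pow_le_one₀ hw0.le hw1
    simp only [hF, hbdef, norm_mul, norm_div, norm_pow, norm_neg, norm_one, Real.norm_eq_abs,
      map_pow, map_neg_eq_map, map_one, Complex.norm_natCast, Complex.norm_real, one_pow,
      one_mul, abs_of_pos hx, abs_of_pos hw0, abs_of_pos hg0,
      abs_of_pos (by norm_num : (0:ℝ) < 2)]
    calc x ^ k / ((k.factorial : ℝ) * ((k + ν).factorial : ℝ)) *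
          ((x / (2 * g) / 2) ^ (2 * m + k) / ((m.factorial : ℝ) * ((k + m).factorial : ℝ)))
        ≤ x ^ k / ((k.factorial : ℝ) * 1) * (1 / ((m.factorial : ℝ) * 1)) := by
          gcongr
          all_goals first | exact hpow | exact hk1 | exact hm1 | exact hx.le | positivity
      _ = x ^ k / k.factorial * (1 / m.factorial) := by ring
  have h_lim : ∀ p : ℕ × ℕ, Tendsto (fun g => F g p) atTop
      (𝓝 (if p = ((0, 0) : ℕ × ℕ) then (1 / (ν.factorial : ℂ)) else 0)) := by
    have hw : Tendsto (fun g : ℝ => ((x / (2 * g) / 2 : ℝ) : ℂ)) atTop (𝓝 0) := by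
      have h1 : Tendsto (fun g : ℝ => x / (2 * g) / 2) atTop (𝓝 0) := by
        have h2 : Tendsto (fun g : ℝ => 2 * g) atTop atTop :=
          tendsto_id.const_mul_atTop two_pos
        simpa using (tendsto_const_nhds.div_atTop h2).div_const (2 : ℝ)
      have h3 := (Complex.continuous_ofReal.tendsto (0 : ℝ)).comp h1
      simpa [Function.comp_def] using h3
    rintro ⟨k, m⟩
    have base : Tendsto (fun g => F g (k, m)) atTop
        (𝓝 (((-1 : ℂ) ^ k * (x : ℂ) ^ k / ((k.factorial : ℂ) * ((k + ν).factorial : ℂ))) *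
          ((0 : ℂ) ^ (2 * m + k) / ((m.factorial : ℂ) * ((k + m).factorial : ℂ))))) :=
      ((hw.pow _).div_const _).const_mul _
    have hval : (if ((k, m) : ℕ × ℕ) = (0, 0) then (1 / (ν.factorial : ℂ)) else 0) =
        ((-1 : ℂ) ^ k * (x : ℂ) ^ k / ((k.factorial : ℂ) * ((k + ν).factorial : ℂ))) *
          ((0 : ℂ) ^ (2 * m + k) / ((m.factorial : ℂ) * ((k + m).factorial : ℂ))) := by
      rcases Nat.eq_zero_or_pos (2 * m + k) with h | h
      · have hk : k = 0 := by omega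
        have hm : m = 0 := by omega
        subst hk; subst hm
        simp [Nat.factorial]
      · rw [if_neg (by simp only [Prod.mk.injEq, not_and]; intro hk hm; omega),
          zero_pow (by omega : 2 * m + k ≠ 0)]
        simp
    rw [hval]
    exact base
  have hT : Tendsto (fun g => ∑' p : ℕ × ℕ, F g p) atTop
      (𝓝 (∑' p : ℕ × ℕ, if p = ((0, 0) : ℕ × ℕ) then (1 / (ν.factorial : ℂ)) else 0)) :=
    tendsto_tsum_of_dominated_convergence h_sum h_lim
      ((eventually_ge_atTop (max x 1)).mono hb)
  rw [tsum_ite_eq] at hT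
  have heq : ∀ᶠ g in atTop, -(∑' p : ℕ × ℕ, F g p) =
      -(∑' k : ℕ, ((-1 : ℂ) ^ k * (x : ℂ) ^ k /
          ((k.factorial : ℂ) * ((k + ν).factorial : ℂ))) * besselI (k : ℂ) (x / (2 * g))) := by
    filter_upwards [eventually_ge_atTop (max x 1)] with g hg
    have hFg : Summable (F g) := h_sum.of_norm_bounded (hb g hg)
    rw [hFg.tsum_prod]
    congr 1
    refine tsum_congr fun k => ?_
    rw [aux_besselI_nat k (x / (2 * g))]
    simp only [hF]
    exact tsum_mul_left
  exact Tendsto.congr' heq hT.neg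

lemma aux_phi_tendsto (ν : ℕ) (x : ℝ) (hx : 0 < x) :
    Tendsto (fun g : ℝ =>
        -(∑' k : ℕ, (-1 : ℂ) ^ k * (x : ℂ) ^ (2 * k) /
            ((k.factorial : ℂ) ^ 2 * Complex.Gamma ((k : ℂ) + ν + 1) *
              ((4 * g : ℝ) : ℂ) ^ k)))
      atTop (𝓝 (-(1 / Complex.Gamma ((ν : ℂ) + 1)))) := by
  have hν : Complex.Gamma ((ν : ℂ) + 1) = (ν.factorial : ℂ) := by
    exact_mod_cast Complex.Gamma_nat_eq_factorial ν
  simp only [aux_Gamma_eq, hν]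
  set f : ℝ → ℕ → ℂ := fun g k => (-1 : ℂ) ^ k * (x : ℂ) ^ (2 * k) /
      ((k.factorial : ℂ) ^ 2 * ((k + ν).factorial : ℂ) * ((4 * g : ℝ) : ℂ) ^ k) with hf
  have h_sum : Summable fun k : ℕ => (1 : ℝ) ^ k / k.factorial :=
    Real.summable_pow_div_factorial 1
  have hb : ∀ g : ℝ, max 1 (x ^ 2) ≤ g → ∀ k, ‖f g k‖ ≤ (1 : ℝ) ^ k / k.factorial := by
    intro g hg k
    have hg1 : (1 : ℝ) ≤ g := le_trans (le_max_left _ _) hg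
    have hgx : x ^ 2 ≤ g := le_trans (le_max_right _ _) hg
    have hg0 : (0 : ℝ) < g := lt_of_lt_of_le one_pos hg1
    have h4g : (0 : ℝ) < 4 * g := by linarith
    have hk1 : (1 : ℝ) ≤ (k.factorial : ℝ) := by
      exact_mod_cast Nat.one_le_iff_ne_zero.mpr (Nat.factorial_ne_zero _)
    have hk2 : (1 : ℝ) ≤ ((k + ν).factorial : ℝ) := by
      exact_mod_cast Nat.one_le_iff_ne_zero.mpr (Nat.factorial_ne_zero _)
    have hx2 : x ^ (2 * k) ≤ (4 * g) ^ k := by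
      rw [pow_mul]
      exact pow_le_pow_left₀ (sq_nonneg x) (by linarith) k
    simp only [hf, norm_div, norm_mul, norm_pow, norm_neg, norm_one, Real.norm_eq_abs,
      map_pow, map_neg_eq_map, map_one, Complex.norm_natCast, Complex.norm_real, one_pow,
      one_mul, abs_of_pos hx, abs_of_pos h4g, abs_of_pos hg0,
      abs_of_pos (by norm_num : (0:ℝ) < 4)]
    calc x ^ (2 * k) / ((k.factorial : ℝ) ^ 2 * ((k + ν).factorial : ℝ) * (4 * g) ^ k)
        ≤ (4 * g) ^ k / ((k.factorial : ℝ) * (4 * g) ^ k) := by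
          refine div_le_div₀ (by positivity) hx2 (by positivity) ?_
          have h5 : (k.factorial : ℝ) ≤ (k.factorial : ℝ) ^ 2 * ((k + ν).factorial : ℝ) := by
            nlinarith
          exact mul_le_mul_of_nonneg_right h5 (by positivity)
      _ = 1 / k.factorial := by
          rw [mul_comm ((k.factorial : ℝ)) ((4 * g) ^ k), ← div_div,
            div_self (by positivity : ((4 * g) ^ k : ℝ) ≠ 0)]
  have h_lim : ∀ k : ℕ, Tendsto (fun g => f g k) atTop
      (𝓝 (if k = 0 then (1 / (ν.factorial : ℂ)) else 0)) := by
    intro k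
    rcases Nat.eq_zero_or_pos k with rfl | hk
    · simp only [hf, pow_zero, mul_zero, mul_one, if_pos rfl, one_pow, Nat.factorial,
        Nat.cast_one, one_mul, Nat.zero_add]
      exact tendsto_const_nhds
    · have hinv : Tendsto (fun g : ℝ => (((4 * g : ℝ)) : ℂ)⁻¹) atTop (𝓝 0) := by
        have h1 : Tendsto (fun g : ℝ => (4 * g)⁻¹) atTop (𝓝 0) :=
          tendsto_inv_atTop_zero.comp (tendsto_id.const_mul_atTop (by norm_num : (0:ℝ) < 4))
        have h2 := (Complex.continuous_ofReal.tendsto (0 : ℝ)).comp h1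
        simpa [Function.comp_def, Complex.ofReal_inv, Complex.ofReal_mul] using h2
      have base := (hinv.pow k).const_mul
        ((-1 : ℂ) ^ k * (x : ℂ) ^ (2 * k) / ((k.factorial : ℂ) ^ 2 * ((k + ν).factorial : ℂ)))
      rw [if_neg (by omega)]
      have hfe : ∀ g : ℝ, f g k =
          ((-1 : ℂ) ^ k * (x : ℂ) ^ (2 * k) / ((k.factorial : ℂ) ^ 2 * ((k + ν).factorial : ℂ)))
            * ((((4 * g : ℝ)) : ℂ)⁻¹) ^ k := by
        intro g
        rw [hf, inv_pow]
        ring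
      have : ((-1 : ℂ) ^ k * (x : ℂ) ^ (2 * k) /
          ((k.factorial : ℂ) ^ 2 * ((k + ν).factorial : ℂ))) * (0 : ℂ) ^ k = 0 := by
        rw [zero_pow (by omega : k ≠ 0), mul_zero]
      rw [← this]
      exact base.congr fun g => (hfe g).symm
  have hT : Tendsto (fun g => ∑' k : ℕ, f g k) atTop
      (𝓝 (∑' k : ℕ, if k = 0 then (1 / (ν.factorial : ℂ)) else 0)) :=
    tendsto_tsum_of_dominated_convergence h_sum h_lim
      ((eventually_ge_atTop (max 1 (x ^ 2))).mono hb)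
  rw [tsum_ite_eq] at hT
  exact hT.neg

/-- Large-`g` asymptotics of `Φ₁(x;g)`. -/
theorem Phi1_large_g_limit (ν : ℕ) (x : ℝ) (hx : 0 < x) :
    Tendsto (fun g : ℝ =>
        -(∑' k : ℕ, ((-1 : ℂ) ^ k * (x : ℂ) ^ k /
            ((k.factorial : ℂ) * Complex.Gamma ((k : ℂ) + ν + 1))) *
          besselI (k : ℂ) (x / (2 * g))))
      atTop (𝓝 (-(1 / Complex.Gamma ((ν : ℂ) + 1)))) ∧
    Tendsto (fun g : ℝ =>
        (-(∑' k : ℕ, ((-1 : ℂ) ^ k * (x : ℂ) ^ k /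
              ((k.factorial : ℂ) * Complex.Gamma ((k : ℂ) + ν + 1))) *
            besselI (k : ℂ) (x / (2 * g)))) -
          (-(∑' k : ℕ, (-1 : ℂ) ^ k * (x : ℂ) ^ (2 * k) /
              ((k.factorial : ℂ) ^ 2 * Complex.Gamma ((k : ℂ) + ν + 1) *
                ((4 * g : ℝ) : ℂ) ^ k))))
      atTop (𝓝 0) := by
  refine ⟨aux_Phi1_tendsto ν x hx, ?_⟩
  have h := (aux_Phi1_tendsto ν x hx).sub (aux_phi_tendsto ν x hx)
  simpa using h
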